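/- Let T_4 be the eventually periodic sequence in Z/4Z with initial block 2102203 followed by the infinitely repeated period 232002102021230022302203. Then for every integer k ≥ 0, the Steinhaus triangle of the initial segment T_4[8k+7] of length 8k+7 is strongly balanced in Z/4Z. -/
import Mathlib


/-- Next row of a Steinhaus triangle: pairwise sums of adjacent entries. -/
def nextRow {m : ℕ} (l : List (ZMod m)) : List (ZMod m) :=
  List.zipWith (· + ·) l l.tail

/-- The rows of the Steinhaus triangle generated by the first row `l`. -/
def triangleRows {m : ℕ} (l : List (ZMod m)) : List (List (ZMod m)) :=
  (List.range l.length).map (fun i => nextRow^[i] l)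

/-- All entries of the Steinhaus triangle generated by `l`. -/
def triangleEntries {m : ℕ} (l : List (ZMod m)) : List (ZMod m) :=
  (triangleRows l).flatten

/-- The Steinhaus triangle of `l` is balanced: all elements of `ZMod m`
occur with the same multiplicity among its entries. -/
def IsBalanced {m : ℕ} (l : List (ZMod m)) : Prop :=
  ∀ a b : ZMod m, (triangleEntries l).count a = (triangleEntries l).count b

/-- The Steinhaus triangle of `l` is strongly balanced (with respect to a
given `step`): for every `t` with `step * t ≤ l.length`, the Steinhaus triangle
of the initial segment of `l` of length `l.length - step * t` is balanced. -/
def IsStronglyBalanced {m : ℕ} (step : ℕ) (l : List (ZMod m)) : Prop :=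
  ∀ t : ℕ, step * t ≤ l.length → IsBalanced (l.take (l.length - step * t))

/-- The eventually periodic sequence with initial block `I` and period `P`. -/
def evPeriodic {m : ℕ} (I P : List (ZMod m)) : ℕ → ZMod m :=
  fun i => if i < I.length then I.getD i 0 else P.getD ((i - I.length) % P.length) 0

/-- The initial segment of length `l` of the sequence `S`. -/
def seg {m : ℕ} (S : ℕ → ZMod m) (l : ℕ) : List (ZMod m) :=
  (List.range l).map S

def T4 : ℕ → ZMod 4 :=
  evPeriodic ([2,1,0,2,2,0,3] : List (ZMod 4)) ([2,3,2,0,0,2,1,0,2,0,2,1,2,3,0,0,2,2,3,0,2,2,0,3] : List (ZMod 4))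

namespace Aux

open Finset

def dstep (S : ℕ → ZMod 4) : ℕ → ZMod 4 := fun n => S n + S (n+1)

def D (i : ℕ) : ℕ → ZMod 4 := dstep^[i] T4

lemma D_succ (i n : ℕ) : D (i+1) n = D i n + D i (n+1) := by
  show (dstep^[i+1] T4) n = _
  rw [Function.iterate_succ_apply']
  rfl

lemma seg_length {m : ℕ} (S : ℕ → ZMod m) (N : ℕ) : (seg S N).length = N := by
  simp [seg]

lemma nextRow_seg {m : ℕ} (S : ℕ → ZMod m) (N : ℕ) :
    nextRow (seg S N) = seg (fun n => S n + S (n+1)) (N-1) := by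
  apply List.ext_getElem
  · simp [nextRow, seg]
  · intro n h1 h2
    simp only [nextRow, List.getElem_zipWith, List.getElem_tail, seg, List.getElem_map,
      List.getElem_range]

lemma iter_seg (i N : ℕ) : nextRow^[i] (seg T4 N) = seg (D i) (N - i) := by
  induction i with
  | zero => simp [D]
  | succ i ih =>
    rw [Function.iterate_succ_apply', ih, nextRow_seg]
    have h : (fun n => D i n + D i (n+1)) = D (i+1) := funext fun n => (D_succ i n).symm
    rw [h, Nat.sub_sub]

lemma seg_getD {m : ℕ} (S : ℕ → ZMod m) {L n : ℕ} (h : n < L) :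
    (seg S L).getD n 0 = S n := by
  rw [List.getD_eq_getElem _ _ (by simpa [seg_length])]
  simp [seg]

lemma seg_count {m : ℕ} [NeZero m] (S : ℕ → ZMod m) (a : ZMod m) (L : ℕ) :
    (seg S L).count a = ∑ n ∈ Finset.range L, if S n = a then 1 else 0 := by
  induction L with
  | zero => simp [seg]
  | succ L ih =>
    have h : seg S (L+1) = seg S L ++ [S L] := by simp [seg, List.range_succ]
    rw [h, List.count_append, ih, Finset.sum_range_succ]
    simp [List.count_singleton', eq_comm]


lemma list_sum_range (g : ℕ → ℕ) (N : ℕ) :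
    ((List.range N).map g).sum = ∑ i ∈ Finset.range N, g i := by
  induction N with
  | zero => simp
  | succ N ih =>
    rw [List.range_succ, List.map_append, List.sum_append, Finset.sum_range_succ, ih]
    simp

def e (a : ZMod 4) (i n : ℕ) : ℕ := if D i n = a then 1 else 0

def FF (a : ZMod 4) (N : ℕ) : ℕ :=
  ∑ i ∈ Finset.range N, ∑ n ∈ Finset.range (N - i), e a i n

lemma count_eq_FF (a : ZMod 4) (N : ℕ) :
    (triangleEntries (seg T4 N)).count a = FF a N := by
  rw [triangleEntries, triangleRows, seg_length, List.count_flatten, List.map_map,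
    list_sum_range, FF]
  refine Finset.sum_congr rfl fun i _ => ?_
  show (nextRow^[i] (seg T4 N)).count a = _
  rw [iter_seg, seg_count]
  rfl

def diagS (a : ZMod 4) (d : ℕ) : ℕ := ∑ i ∈ Finset.range (d+1), e a i (d-i)

lemma FF_diag (a : ZMod 4) (N : ℕ) : FF a N = ∑ d ∈ Finset.range N, diagS a d := by
  induction N with
  | zero => simp [FF]
  | succ N ih =>
    rw [Finset.sum_range_succ, ← ih, FF, FF, Finset.sum_range_succ]
    have h1 : ∀ i ∈ Finset.range N,
        ∑ n ∈ Finset.range (N + 1 - i), e a i n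
          = (∑ n ∈ Finset.range (N - i), e a i n) + e a i (N - i) := by
      intro i hi
      rw [Finset.mem_range] at hi
      rw [show N + 1 - i = (N - i) + 1 by omega, Finset.sum_range_succ]
    rw [Finset.sum_congr rfl h1, Finset.sum_add_distrib, diagS, Finset.sum_range_succ]
    simp
    omega


lemma T4_per (n : ℕ) (h : 7 ≤ n) : T4 (n+24) = T4 n := by
  show evPeriodic _ _ _ = evPeriodic _ _ _
  unfold evPeriodic
  simp only [show ([2,1,0,2,2,0,3] : List (ZMod 4)).length = 7 from rfl,
    show ([2,3,2,0,0,2,1,0,2,0,2,1,2,3,0,0,2,2,3,0,2,2,0,3] : List (ZMod 4)).length = 24 from rfl]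
  rw [if_neg (by omega), if_neg (by omega)]
  congr 1
  omega

lemma D_horiz (i : ℕ) : ∀ n, 7 ≤ n → D i (n+24) = D i n := by
  induction i with
  | zero => exact fun n h => T4_per n h
  | succ i ih =>
    intro n h
    rw [D_succ, D_succ, ih n h, show n+24+1 = (n+1)+24 by ring, ih (n+1) (by omega)]

set_option maxHeartbeats 2000000 in
lemma base31 : nextRow^[6] (seg T4 37) = nextRow^[30] (seg T4 61) := by decide

lemma D6_eq_D30 : ∀ n, D 6 n = D 30 n := by
  have hlist : seg (D 6) 31 = seg (D 30) 31 := by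
    have h1 := iter_seg 6 37
    have h2 := iter_seg 30 61
    rw [show (37:ℕ) - 6 = 31 from rfl] at h1
    rw [show (61:ℕ) - 30 = 31 from rfl] at h2
    rw [← h1, ← h2]
    exact base31
  intro n
  induction n using Nat.strong_induction_on with
  | _ n IH =>
    by_cases hn : n < 31
    · have h : (seg (D 6) 31).getD n 0 = (seg (D 30) 31).getD n 0 := by rw [hlist]
      rwa [seg_getD _ hn, seg_getD _ hn] at h
    · rw [show n = (n-24)+24 by omega, D_horiz 6 _ (by omega), D_horiz 30 _ (by omega)]
      exact IH (n-24) (by omega)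

lemma D_vert_aux : ∀ j, ∀ n, D (6+j+24) n = D (6+j) n := by
  intro j
  induction j with
  | zero => exact fun n => (D6_eq_D30 n).symm
  | succ j ih =>
    intro n
    rw [show 6+(j+1)+24 = (6+j+24)+1 by ring, D_succ (6+j+24), show 6+(j+1) = (6+j)+1 from rfl,
      D_succ (6+j), ih n, ih (n+1)]

lemma D_vert (i : ℕ) (h : 6 ≤ i) : ∀ n, D (i+24) n = D i n := by
  obtain ⟨j, rfl⟩ : ∃ j, i = 6 + j := ⟨i - 6, by omega⟩
  exact D_vert_aux j

lemma e_horiz (a : ZMod 4) (i n : ℕ) (h : 7 ≤ n) : e a i (n+24) = e a i n := by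
  unfold e; rw [D_horiz i n h]

lemma e_vert (a : ZMod 4) (i n : ℕ) (h : 6 ≤ i) : e a (i+24) n = e a i n := by
  unfold e; rw [D_vert i h n]

lemma e_def (a : ZMod 4) (i n : ℕ) : e a i n = if D i n = a then 1 else 0 := rfl

attribute [irreducible] D e

lemma sum_range_add (f : ℕ → ℕ) (m n : ℕ) :
    ∑ i ∈ Finset.range (m+n), f i
      = (∑ i ∈ Finset.range m, f i) + ∑ i ∈ Finset.range n, f (m+i) := by
  induction n with
  | zero => simp
  | succ n ih =>
    rw [show m+(n+1) = (m+n)+1 from rfl, Finset.sum_range_succ, ih, Finset.sum_range_succ,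
      Nat.add_assoc]

def sig (a : ZMod 4) (d : ℕ) : ℕ := ∑ i ∈ Finset.range 24, e a (6+i) (d-(6+i))

lemma diag_step (a : ZMod 4) (c : ℕ) :
    diagS a (c+60) = diagS a (c+36) + sig a (c+36) := by
  unfold diagS sig
  rw [show c+60+1 = 30+(c+31) by ring, sum_range_add]
  rw [show c+36+1 = 30+(c+7) by ring, sum_range_add (fun i => e a i (c+36-i)) 30 (c+7)]
  rw [show c+31 = 24+(c+7) by ring, sum_range_add (fun i => e a (30+i) (c+60-(30+i))) 24 (c+7)]
  have hA : ∀ i ∈ Finset.range 30, e a i (c+60-i) = e a i (c+36-i) := by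
    intro i hi
    rw [Finset.mem_range] at hi
    rw [show c+60-i = (c+36-i)+24 by omega]
    exact e_horiz a i _ (by omega)
  have hB : ∀ j ∈ Finset.range 24, e a (30+j) (c+60-(30+j)) = e a (6+j) (c+36-(6+j)) := by
    intro j hj
    rw [Finset.mem_range] at hj
    rw [show (30+j) = (6+j)+24 by ring, e_vert a (6+j) _ (by omega)]
    congr 1
    omega
  have hC : ∀ k ∈ Finset.range (c+7),
      e a (30+(24+k)) (c+60-(30+(24+k))) = e a (30+k) (c+36-(30+k)) := by
    intro k hk
    rw [Finset.mem_range] at hk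
    rw [show (30+(24+k)) = (30+k)+24 by ring, e_vert a (30+k) _ (by omega)]
    congr 1
    omega
  rw [Finset.sum_congr rfl hA, Finset.sum_congr rfl hB, Finset.sum_congr rfl hC]
  ring

lemma sig_per (a : ZMod 4) (c : ℕ) : sig a (36+c+24) = sig a (36+c) := by
  unfold sig
  refine Finset.sum_congr rfl fun i hi => ?_
  rw [Finset.mem_range] at hi
  rw [show 36+c+24-(6+i) = (36+c-(6+i))+24 by omega]
  exact e_horiz a _ _ (by omega)

def SumSig (a : ZMod 4) (N : ℕ) : ℕ := ∑ d ∈ Finset.range 24, sig a (N+d)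

lemma sumsig_const (a : ZMod 4) : ∀ c, SumSig a (36+c) = SumSig a 36 := by
  intro c
  induction c with
  | zero => rfl
  | succ c ih =>
    rw [← ih]
    unfold SumSig
    have h1 : (∑ d ∈ Finset.range 24, sig a (36+(c+1)+d)) + sig a (36+c)
        = ∑ d ∈ Finset.range 25, sig a (36+c+d) := by
      have ha : (∑ d ∈ Finset.range 24, sig a (36+(c+1)+d))
          = ∑ d ∈ Finset.range 24, sig a (36+c+(d+1)) :=
        Finset.sum_congr rfl fun d _ => by rw [show 36+(c+1)+d = 36+c+(d+1) by omega]
      rw [ha, Finset.sum_range_succ' (fun d => sig a (36+c+d)) 24, Nat.add_zero]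
    have h2 : (∑ d ∈ Finset.range 25, sig a (36+c+d))
        = (∑ d ∈ Finset.range 24, sig a (36+c+d)) + sig a (36+c+24) :=
      Finset.sum_range_succ _ 24
    have h3 : sig a (36+c+24) = sig a (36+c) := sig_per a c
    omega

def Del (a : ZMod 4) (N : ℕ) : ℕ := ∑ d ∈ Finset.range 24, diagS a (N+d)

lemma FF_split (a : ZMod 4) (N : ℕ) : FF a (N+24) = FF a N + Del a N := by
  rw [FF_diag, FF_diag, sum_range_add]
  rfl

lemma seg_shift {m : ℕ} (S : ℕ → ZMod m) (s L : ℕ) :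
    seg (fun d => S (s+d)) L = (seg S (s+L)).drop s := by
  apply List.ext_getElem
  · simp [seg]
  · intro n h1 h2
    simp [seg]

set_option maxHeartbeats 4000000 in
lemma Omega_decide : ∀ a : ZMod 4,
    (∑ i ∈ Finset.range 24, ((nextRow^[6+i] (seg T4 60)).drop (30-i)).count a) = 144 := by
  decide

lemma Omega_val (a : ZMod 4) : SumSig a 36 = 144 := by
  unfold SumSig sig
  rw [Finset.sum_comm]
  have h : ∀ i ∈ Finset.range 24, (∑ d ∈ Finset.range 24, e a (6+i) (36+d-(6+i)))
      = ((nextRow^[6+i] (seg T4 60)).drop (30-i)).count a := by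
    intro i hi
    rw [Finset.mem_range] at hi
    have h1 : ∀ d ∈ Finset.range 24,
        e a (6+i) (36+d-(6+i)) = if D (6+i) ((30-i)+d) = a then 1 else 0 := by
      intro d _
      rw [show 36+d-(6+i) = (30-i)+d by omega, e_def]
    calc (∑ d ∈ Finset.range 24, e a (6+i) (36+d-(6+i)))
        = ∑ d ∈ Finset.range 24, if D (6+i) ((30-i)+d) = a then 1 else 0 :=
          Finset.sum_congr rfl h1
      _ = (seg (fun d => D (6+i) ((30-i)+d)) 24).count a := (seg_count _ a 24).symm
      _ = ((nextRow^[6+i] (seg T4 60)).drop (30-i)).count a := by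
          rw [seg_shift, show (30-i)+24 = 60-(6+i) by omega, ← iter_seg]
  rw [Finset.sum_congr rfl h]
  exact Omega_decide a

lemma Del_step (a : ZMod 4) (c : ℕ) : Del a (36+c+24) = Del a (36+c) + 144 := by
  unfold Del
  have h : ∀ d ∈ Finset.range 24,
      diagS a (36+c+24+d) = diagS a (36+c+d) + sig a (36+c+d) := by
    intro d _
    have hds := diag_step a (c+d)
    rw [show 36+c+24+d = c+d+60 by ring, show 36+c+d = c+d+36 by ring]
    exact hds
  rw [Finset.sum_congr rfl h, Finset.sum_add_distrib]
  have h2 : (∑ d ∈ Finset.range 24, sig a (36+c+d)) = 144 := by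
    have := sumsig_const a c
    unfold SumSig at this
    rw [this]
    exact Omega_val a
  omega

lemma count_rows (a : ZMod 4) (N : ℕ) :
    (triangleEntries (seg T4 N)).count a
      = ∑ i ∈ Finset.range N, (nextRow^[i] (seg T4 N)).count a := by
  rw [triangleEntries, triangleRows, seg_length, List.count_flatten, List.map_map,
    list_sum_range]
  rfl

set_option maxRecDepth 10000 in
set_option maxHeartbeats 8000000 in
lemma rows7 : ∀ a : ZMod 4,
    (∑ i ∈ Finset.range 7, (nextRow^[i] (seg T4 7)).count a) = 7 := by decide

lemma FFb7 (a : ZMod 4) : FF a 7 = 7 := by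
  rw [← count_eq_FF, count_rows]
  exact rows7 a

set_option maxRecDepth 10000 in
set_option maxHeartbeats 8000000 in
lemma rows15 : ∀ a : ZMod 4,
    (∑ i ∈ Finset.range 15, (nextRow^[i] (seg T4 15)).count a) = 30 := by decide

lemma FFb15 (a : ZMod 4) : FF a 15 = 30 := by
  rw [← count_eq_FF, count_rows]
  exact rows15 a

set_option maxRecDepth 10000 in
set_option maxHeartbeats 8000000 in
lemma rows23 : ∀ a : ZMod 4,
    (∑ i ∈ Finset.range 23, (nextRow^[i] (seg T4 23)).count a) = 69 := by decide

lemma FFb23 (a : ZMod 4) : FF a 23 = 69 := by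
  rw [← count_eq_FF, count_rows]
  exact rows23 a

set_option maxRecDepth 10000 in
set_option maxHeartbeats 8000000 in
lemma rows31 : ∀ a : ZMod 4,
    (∑ i ∈ Finset.range 31, (nextRow^[i] (seg T4 31)).count a) = 124 := by decide

lemma FFb31 (a : ZMod 4) : FF a 31 = 124 := by
  rw [← count_eq_FF, count_rows]
  exact rows31 a

set_option maxRecDepth 10000 in
set_option maxHeartbeats 8000000 in
lemma rows39 : ∀ a : ZMod 4,
    (∑ i ∈ Finset.range 39, (nextRow^[i] (seg T4 39)).count a) = 195 := by decide

lemma FFb39 (a : ZMod 4) : FF a 39 = 195 := by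
  rw [← count_eq_FF, count_rows]
  exact rows39 a

set_option maxRecDepth 10000 in
set_option maxHeartbeats 8000000 in
lemma rows47 : ∀ a : ZMod 4,
    (∑ i ∈ Finset.range 47, (nextRow^[i] (seg T4 47)).count a) = 282 := by decide

lemma FFb47 (a : ZMod 4) : FF a 47 = 282 := by
  rw [← count_eq_FF, count_rows]
  exact rows47 a

set_option maxRecDepth 10000 in
set_option maxHeartbeats 8000000 in
lemma rows55 : ∀ a : ZMod 4,
    (∑ i ∈ Finset.range 55, (nextRow^[i] (seg T4 55)).count a) = 385 := by decide

lemma FFb55 (a : ZMod 4) : FF a 55 = 385 := by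
  rw [← count_eq_FF, count_rows]
  exact rows55 a

set_option maxRecDepth 10000 in
set_option maxHeartbeats 8000000 in
lemma rows63 : ∀ a : ZMod 4,
    (∑ i ∈ Finset.range 63, (nextRow^[i] (seg T4 63)).count a) = 504 := by decide

lemma FFb63 (a : ZMod 4) : FF a 63 = 504 := by
  rw [← count_eq_FF, count_rows]
  exact rows63 a

set_option maxRecDepth 10000 in
set_option maxHeartbeats 8000000 in
lemma rows71 : ∀ a : ZMod 4,
    (∑ i ∈ Finset.range 71, (nextRow^[i] (seg T4 71)).count a) = 639 := by decide

lemma FFb71 (a : ZMod 4) : FF a 71 = 639 := by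
  rw [← count_eq_FF, count_rows]
  exact rows71 a

set_option maxRecDepth 10000 in
set_option maxHeartbeats 8000000 in
lemma rows79 : ∀ a : ZMod 4,
    (∑ i ∈ Finset.range 79, (nextRow^[i] (seg T4 79)).count a) = 790 := by decide

lemma FFb79 (a : ZMod 4) : FF a 79 = 790 := by
  rw [← count_eq_FF, count_rows]
  exact rows79 a

lemma Del_bal : ∀ m, ∀ a b : ZMod 4, Del a (8*m+39) = Del b (8*m+39) := by
  intro m
  induction m using Nat.strong_induction_on with
  | _ m IH =>
    intro a b
    by_cases hm : m < 3
    · have hsa39 := FF_split a 39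
      have hsb39 := FF_split b 39
      have hsa47 := FF_split a 47
      have hsb47 := FF_split b 47
      have hsa55 := FF_split a 55
      have hsb55 := FF_split b 55
      rw [show (39+24:ℕ) = 63 by norm_num, FFb63 a, FFb39 a] at hsa39
      rw [show (39+24:ℕ) = 63 by norm_num, FFb63 b, FFb39 b] at hsb39
      rw [show (47+24:ℕ) = 71 by norm_num, FFb71 a, FFb47 a] at hsa47
      rw [show (47+24:ℕ) = 71 by norm_num, FFb71 b, FFb47 b] at hsb47
      rw [show (55+24:ℕ) = 79 by norm_num, FFb79 a, FFb55 a] at hsa55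
      rw [show (55+24:ℕ) = 79 by norm_num, FFb79 b, FFb55 b] at hsb55
      interval_cases m
      · rw [show 8*0+39 = 39 by norm_num]; omega
      · rw [show 8*1+39 = 47 by norm_num]; omega
      · rw [show 8*2+39 = 55 by norm_num]; omega
    · obtain ⟨q, rfl⟩ : ∃ q, m = q + 3 := ⟨m-3, by omega⟩
      have h1 := Del_step a (8*q+3)
      have h2 := Del_step b (8*q+3)
      rw [show (36+(8*q+3):ℕ) = 8*q+39 by ring] at h1 h2
      have h3 := IH q (by omega) a b
      rw [show 8*(q+3)+39 = 8*q+39+24 by ring]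
      omega

lemma FF_bal : ∀ m, ∀ a b : ZMod 4, FF a (8*m+7) = FF b (8*m+7) := by
  intro m
  induction m using Nat.strong_induction_on with
  | _ m IH =>
    intro a b
    by_cases hm : m < 10
    · interval_cases m
      · rw [show 8*0+7 = 7 by norm_num, FFb7, FFb7]
      · rw [show 8*1+7 = 15 by norm_num, FFb15, FFb15]
      · rw [show 8*2+7 = 23 by norm_num, FFb23, FFb23]
      · rw [show 8*3+7 = 31 by norm_num, FFb31, FFb31]
      · rw [show 8*4+7 = 39 by norm_num, FFb39, FFb39]
      · rw [show 8*5+7 = 47 by norm_num, FFb47, FFb47]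
      · rw [show 8*6+7 = 55 by norm_num, FFb55, FFb55]
      · rw [show 8*7+7 = 63 by norm_num, FFb63, FFb63]
      · rw [show 8*8+7 = 71 by norm_num, FFb71, FFb71]
      · rw [show 8*9+7 = 79 by norm_num, FFb79, FFb79]
    · obtain ⟨q, rfl⟩ : ∃ q, m = q + 10 := ⟨m-10, by omega⟩
      have hsa := FF_split a (8*q+63)
      have hsb := FF_split b (8*q+63)
      have hIH := IH (q+7) (by omega) a b
      rw [show 8*(q+7)+7 = 8*q+63 by ring] at hIH
      have hD := Del_bal (q+3) a b
      rw [show 8*(q+3)+39 = 8*q+63 by ring] at hD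
      rw [show 8*(q+10)+7 = 8*q+63+24 by ring]
      omega

lemma BAL (j : ℕ) : IsBalanced (seg T4 (8*j+7)) := by
  intro a b
  rw [count_eq_FF, count_eq_FF]
  exact FF_bal j a b

end Aux

theorem stmt6 (k : ℕ) :
    IsStronglyBalanced 8 (seg T4 (8 * k + 7)) := by
  intro t ht
  rw [Aux.seg_length] at ht ⊢
  have hseg : (seg T4 (8*k+7)).take (8*k+7 - 8*t) = seg T4 (8*(k-t)+7) := by
    unfold seg
    rw [← List.map_take, List.take_range]
    congr 1
    congr 1
    omega
  rw [show 8 * k + 7 = 8*k+7 from rfl, hseg]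
  exact Aux.BAL (k-t)
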